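/- Let π be a probability measure on [0,1]^d and F a triangular transform of π such that F is Hölder continuous with exponent κ ∈ (0,1] and there is M < ∞ such that for every i and every fixed x_{1:i−1} the map x_i ↦ F_i(x_{1:i−1}, x_i) is Lipschitz with constant M. Set β = ⌈κ^{-1}⌉ and d̃ = ∑_{i=0}^{d−1} β^i. Then there exists a constant c > 0 such that for every integer L ≥ 2 and every box B = ∏_{i=1}^d [a_i, b_i] with 0 ≤ a_i < b_i < 1, the image F(∂B) of the topological boundary of B intersects at most c L^{d̃−1} of the L^{d̃} cells of the partition of [0,1)^d into congruent axis-parallel hyperrectangles whose i-th side length equals L^{-β^{d−i}} (for i = 1, …, d). -/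

import Mathlib

open MeasureTheory ProbabilityTheory Filter Set
open scoped ENNReal NNReal

noncomputable section

/-- The closed unit cube `[0,1]^d` in `ℝ^d`. -/
def cubeIcc (d : ℕ) : Set (Fin d → ℝ) := Set.univ.pi fun _ => Set.Icc (0 : ℝ) 1

/-- The half-open unit cube `[0,1)^d` in `ℝ^d`. -/
def cubeIco (d : ℕ) : Set (Fin d → ℝ) := Set.univ.pi fun _ => Set.Ico (0 : ℝ) 1

/-- `IsGoodBox a b` : the box `∏ᵢ [aᵢ, bᵢ]` satisfies `0 ≤ aᵢ < bᵢ < 1` for all `i`. -/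
def IsGoodBox {d : ℕ} (a b : Fin d → ℝ) : Prop := ∀ i, 0 ≤ a i ∧ a i < b i ∧ b i < 1

/-- The closed box `∏ᵢ [aᵢ, bᵢ]` in `ℝ^d`. -/
def clBox {d : ℕ} (a b : Fin d → ℝ) : Set (Fin d → ℝ) :=
  Set.univ.pi fun i => Set.Icc (a i) (b i)

/-- The extreme norm distance `‖μ − ν‖_E` between two measures on `ℝ^d`:
the supremum over boxes `∏ᵢ [aᵢ, bᵢ]` with `0 ≤ aᵢ < bᵢ < 1` of `|μ(B) − ν(B)|`. -/
def extDist {d : ℕ} (μ ν : Measure (Fin d → ℝ)) : ℝ :=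
  ⨆ p : {q : (Fin d → ℝ) × (Fin d → ℝ) // IsGoodBox q.1 q.2},
    |(μ (clBox p.1.1 p.1.2)).toReal - (ν (clBox p.1.1 p.1.2)).toReal|

/-- A triangular (Rosenblatt-type) transform `F` of a probability measure `π` on `[0,1]^d`:
the `i`-th component of `F x` depends only on `x_1, …, x_i`, is strictly increasing in `x_i`,
`F` restricts to a bijection of `[0,1)^d` onto itself, and the pushforward of `π` by `F`
is Lebesgue measure on the unit cube. -/
structure IsTriangular {d : ℕ} (π : Measure (Fin d → ℝ))
    (F : (Fin d → ℝ) → (Fin d → ℝ)) : Prop where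
  measurable : Measurable F
  dep : ∀ (i : Fin d) (x y : Fin d → ℝ), (∀ j, j ≤ i → x j = y j) → F x i = F y i
  strictMono : ∀ (i : Fin d), ∀ x ∈ cubeIcc d,
    StrictMonoOn (fun s : ℝ => F (Function.update x i s) i) (Set.Icc (0 : ℝ) 1)
  bijOn : Set.BijOn F (cubeIco d) (cubeIco d)
  map_eq : π.map F = volume.restrict (cubeIco d)

/-- The (half-open) cell with multi-index `cc` of the anisotropic partition of `[0,1)^d`
whose `i`-th side length is `L^{-β^{d−1−i}}` (with `i : Fin d` zero-based). -/
def anisoCell (d : ℕ) (β L : ℕ) (cc : Fin d → ℕ) : Set (Fin d → ℝ) :=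
  Set.univ.pi fun i =>
    Set.Ico ((cc i : ℝ) * ((L : ℝ) ^ (β ^ (d - 1 - (i : ℕ))))⁻¹)
      (((cc i : ℝ) + 1) * ((L : ℝ) ^ (β ^ (d - 1 - (i : ℕ))))⁻¹)

namespace BICCAux

/-- A face of a box: coordinate `j` pinned to `t`. -/
def face {d : ℕ} (a b : Fin d → ℝ) (j : Fin d) (t : ℝ) : Set (Fin d → ℝ) :=
  {x | (∀ i, a i ≤ x i ∧ x i ≤ b i) ∧ x j = t}

lemma ncard_prod' {α β : Type*} (s : Set α) (t : Set β) :
    (s ×ˢ t).ncard = s.ncard * t.ncard := by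
  rw [← Nat.card_coe_set_eq, ← Nat.card_coe_set_eq, ← Nat.card_coe_set_eq,
    Nat.card_congr (Equiv.Set.prod s t), Nat.card_prod]

lemma ncard_biUnion_le {α ι : Type*} (s : Finset ι) (t : ι → Set α) :
    (⋃ i ∈ s, t i).ncard ≤ ∑ i ∈ s, (t i).ncard := by
  classical
  induction s using Finset.induction_on with
  | empty => simp
  | insert _ _ ha ih =>
      rw [Finset.set_biUnion_insert, Finset.sum_insert ha]
      exact le_trans (Set.ncard_union_le _ _) (Nat.add_le_add_left ih _)

lemma mem_anisoCell {d β L : ℕ} {cc : Fin d → ℕ} {y : Fin d → ℝ} :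
    y ∈ anisoCell d β L cc ↔ ∀ i : Fin d,
      (cc i : ℝ) * ((L : ℝ) ^ (β ^ (d - 1 - (i : ℕ))))⁻¹ ≤ y i ∧
      y i < ((cc i : ℝ) + 1) * ((L : ℝ) ^ (β ^ (d - 1 - (i : ℕ))))⁻¹ := by
  simp [anisoCell, Set.mem_pi, Set.mem_Ico]

lemma cell_idx_eq {m c : ℕ} (hm : 0 < m) {y : ℝ}
    (h1 : (c : ℝ) * ((m : ℝ))⁻¹ ≤ y) (h2 : y < ((c : ℝ) + 1) * ((m : ℝ))⁻¹) :
    c = ⌊y * m⌋₊ := by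
  have hm' : (0 : ℝ) < m := by exact_mod_cast hm
  have h1' : (c : ℝ) ≤ y * m := by
    rw [← div_eq_mul_inv, div_le_iff₀ hm'] at h1; exact h1
  have h2' : y * m < (c : ℝ) + 1 := by
    have := (mul_lt_mul_of_pos_right h2 hm')
    rwa [mul_assoc, inv_mul_cancel₀ hm'.ne', mul_one] at this
  symm
  rw [Nat.floor_eq_iff (le_trans (by positivity) h1')]
  exact ⟨h1', by push_cast; linarith⟩

lemma floor_cell_mem {m : ℕ} (hm : 0 < m) {y : ℝ} (h0 : 0 ≤ y) (h1 : y < 1) :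
    (⌊y * m⌋₊ : ℝ) * ((m : ℝ))⁻¹ ≤ y ∧ y < ((⌊y * m⌋₊ : ℝ) + 1) * ((m : ℝ))⁻¹ ∧
      ⌊y * m⌋₊ < m := by
  have hm' : (0 : ℝ) < m := by exact_mod_cast hm
  have hym : 0 ≤ y * m := by positivity
  have hfl : (⌊y * m⌋₊ : ℝ) ≤ y * m := Nat.floor_le hym
  have hfu : y * m < (⌊y * m⌋₊ : ℝ) + 1 := Nat.lt_floor_add_one _
  refine ⟨?_, ?_, ?_⟩
  · rw [← div_eq_mul_inv, div_le_iff₀ hm']; exact hfl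
  · rw [← div_eq_mul_inv, lt_div_iff₀ hm']; exact hfu
  · exact (Nat.floor_lt hym).mpr (by nlinarith)

lemma counted_lt {n β L : ℕ} (hL : 0 < L) {Y : Set (Fin n → ℝ)} (hY : Y ⊆ cubeIco n)
    {cc : Fin n → ℕ} (h : (anisoCell n β L cc ∩ Y).Nonempty) (i : Fin n) :
    cc i < L ^ (β ^ (n - 1 - (i : ℕ))) := by
  obtain ⟨y, hy1, hy2⟩ := h
  have hyc := hY hy2
  simp only [cubeIco, Set.mem_pi, Set.mem_univ, forall_true_left, Set.mem_Ico] at hyc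
  have hcell := (mem_anisoCell.mp hy1 i).1
  have hm : (0:ℝ) < (L:ℝ) ^ (β ^ (n - 1 - (i : ℕ))) := by positivity
  have h2 : (cc i : ℝ) < (L:ℝ) ^ (β ^ (n - 1 - (i : ℕ))) := by
    by_contra hcon
    push_neg at hcon
    have : (1:ℝ) ≤ (cc i : ℝ) * ((L:ℝ) ^ (β ^ (n - 1 - (i : ℕ))))⁻¹ := by
      rw [← div_eq_mul_inv, le_div_iff₀ hm]; linarith
    have := (hyc i).2
    linarith
  exact_mod_cast h2

lemma counted_finite {n β L : ℕ} (hL : 0 < L) {Y : Set (Fin n → ℝ)} (hY : Y ⊆ cubeIco n) :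
    {cc : Fin n → ℕ | (anisoCell n β L cc ∩ Y).Nonempty}.Finite := by
  refine (Set.Finite.pi (fun i : Fin n => Set.finite_Iio (L ^ (β ^ (n - 1 - (i : ℕ)))))).subset ?_
  intro cc hcc
  simp only [Set.mem_pi, Set.mem_univ, forall_true_left, Set.mem_Iio]
  exact fun i => counted_lt hL hY hcc i

lemma cons_mem_cubeIcc {d : ℕ} {s : ℝ} (hs : s ∈ Set.Icc (0:ℝ) 1) {x : Fin d → ℝ}
    (hx : x ∈ cubeIcc d) : Fin.cons s x ∈ cubeIcc (d + 1) := by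
  simp only [cubeIcc, Set.mem_pi, Set.mem_univ, forall_true_left] at *
  intro i
  rcases Fin.eq_zero_or_eq_succ i with rfl | ⟨i', rfl⟩
  · simpa using hs
  · simpa using hx i'

lemma cons_mem_cubeIco {d : ℕ} {s : ℝ} (hs : s ∈ Set.Ico (0:ℝ) 1) {x : Fin d → ℝ}
    (hx : x ∈ cubeIco d) : Fin.cons s x ∈ cubeIco (d + 1) := by
  simp only [cubeIco, Set.mem_pi, Set.mem_univ, forall_true_left] at *
  intro i
  rcases Fin.eq_zero_or_eq_succ i with rfl | ⟨i', rfl⟩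
  · simpa using hs
  · simpa using hx i'

lemma norm_le_of_coords {d : ℕ} {x y : Fin d → ℝ} {r : ℝ} (hr : 0 ≤ r)
    (h : ∀ i, |x i - y i| ≤ r) : ‖x - y‖ ≤ r := by
  rw [pi_norm_le_iff_of_nonneg hr]
  intro i
  simpa [Real.norm_eq_abs] using h i

lemma key_exp {L β d e : ℕ} (hL : 2 ≤ L) (hβ : 1 ≤ β) (hd : 1 ≤ d) (he : e ≤ β ^ (d - 1))
    {κ : ℝ} (hκ0 : 0 < κ) (hβκ : 1 ≤ (β : ℝ) * κ) :
    (((L : ℝ) ^ (β ^ d))⁻¹) ^ κ * (L : ℝ) ^ e ≤ 1 := by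
  have hL1 : (1:ℝ) < L := by exact_mod_cast hL
  have hLpos : (0:ℝ) < (L:ℝ) ^ (β ^ d) := by positivity
  rw [← Real.rpow_natCast (L:ℝ) e, Real.inv_rpow hLpos.le, ← Real.rpow_natCast (L:ℝ) (β ^ d),
    ← Real.rpow_mul (by positivity), inv_mul_le_iff₀ (by positivity), mul_one,
    Real.rpow_le_rpow_left_iff hL1]
  have h1 : (e : ℝ) ≤ (β : ℝ) ^ (d - 1) := by exact_mod_cast Nat.cast_le.mpr (by exact_mod_cast he)
  have h2 : ((β ^ d : ℕ) : ℝ) = (β : ℝ) ^ (d - 1) * (β : ℝ) := by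
    push_cast
    rw [← pow_succ]
    congr 1
    omega
  have h3 : (0:ℝ) ≤ (β : ℝ) ^ (d - 1) := by positivity
  calc (e : ℝ) ≤ (β : ℝ) ^ (d - 1) := h1
    _ ≤ (β : ℝ) ^ (d - 1) * ((β : ℝ) * κ) := le_mul_of_one_le_right h3 hβκ
    _ = ((β ^ d : ℕ) : ℝ) * κ := by rw [h2]; ring

lemma face_subset_cubeIco {d : ℕ} {a b : Fin d → ℝ}
    (hab : ∀ i, 0 ≤ a i ∧ a i ≤ b i ∧ b i < 1) {j : Fin d} {t : ℝ} :
    face a b j t ⊆ cubeIco d := by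
  intro x hx
  simp only [cubeIco, Set.mem_pi, Set.mem_univ, forall_true_left, Set.mem_Ico]
  intro i
  exact ⟨(hab i).1.trans (hx.1 i).1, lt_of_le_of_lt (hx.1 i).2 (hab i).2.2⟩

lemma face_subset_cubeIcc {d : ℕ} {a b : Fin d → ℝ}
    (hab : ∀ i, 0 ≤ a i ∧ a i ≤ b i ∧ b i < 1) {j : Fin d} {t : ℝ} :
    face a b j t ⊆ cubeIcc d := by
  intro x hx
  simp only [cubeIcc, Set.mem_pi, Set.mem_univ, forall_true_left, Set.mem_Icc]
  intro i
  exact ⟨(hab i).1.trans (hx.1 i).1, ((hx.1 i).2.trans (hab i).2.2.le)⟩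

set_option maxHeartbeats 2000000 in
theorem count_face (d : ℕ) :
    ∀ (κ C : ℝ) (β : ℕ), 0 < κ → κ ≤ 1 → 0 ≤ C → 1 ≤ (β : ℝ) * κ →
    ∃ c : ℝ, 0 < c ∧ ∀ (L : ℕ), 2 ≤ L →
    ∀ F : (Fin d → ℝ) → (Fin d → ℝ),
    (∀ (i : Fin d) (x y : Fin d → ℝ), (∀ k, k ≤ i → x k = y k) → F x i = F y i) →
    (∀ (i : Fin d), ∀ x ∈ cubeIcc d,
      MonotoneOn (fun s : ℝ => F (Function.update x i s) i) (Set.Icc (0:ℝ) 1)) →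
    (∀ x ∈ cubeIcc d, ∀ y ∈ cubeIcc d, ∀ i, |F x i - F y i| ≤ C * ‖x - y‖ ^ κ) →
    Set.MapsTo F (cubeIco d) (cubeIco d) →
    ∀ a b : Fin d → ℝ, (∀ i, 0 ≤ a i ∧ a i ≤ b i ∧ b i < 1) →
    ∀ (j : Fin d) (t : ℝ), a j ≤ t → t ≤ b j →
    ({cc : Fin d → ℕ | (anisoCell d β L cc ∩ F '' face a b j t).Nonempty}.ncard : ℝ) ≤
      c * (L : ℝ) ^ ((∑ i ∈ Finset.range d, β ^ i) - 1) := by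
  induction d with
  | zero =>
      exact fun κ C β _ _ _ _ =>
        ⟨1, one_pos, fun L _ F _ _ _ _ a b _ j => j.elim0⟩
  | succ d IH =>
      intro κ C β hκ0 hκ1 hC hβκ
      obtain ⟨c₀, hc₀, Hc₀⟩ := IH κ C β hκ0 hκ1 hC hβκ
      have hβ1 : 1 ≤ β := by
        by_contra hcon
        push_neg at hcon
        interval_cases β
        · simp at hβκ; linarith
      set w : ℕ := ⌈C⌉₊ + 1 with hw
      refine ⟨(C + 2) * c₀ * ((2 * w + 1 : ℕ) : ℝ) ^ d + 1, by positivity, ?_⟩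
      intro L hL F hdep hmono hHol hmaps a b hab j t hta htb
      have hL0 : 0 < L := by omega
      have hL1 : (1:ℝ) < (L:ℝ) := by exact_mod_cast hL
      have hLR : (0:ℝ) < (L:ℝ) := by linarith
      have hfaceIco : face a b j t ⊆ cubeIco (d+1) := face_subset_cubeIco hab
      have hfaceIcc : face a b j t ⊆ cubeIcc (d+1) := face_subset_cubeIcc hab
      have hYIco : F '' face a b j t ⊆ cubeIco (d+1) :=
        fun y ⟨x, hx, hxy⟩ => hxy ▸ hmaps (hfaceIco hx)
      have hcexp : ∀ i : Fin (d+1), d + 1 - 1 - (i:ℕ) = d - (i:ℕ) := fun i => by omega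
      rcases Fin.eq_zero_or_eq_succ j with rfl | ⟨j₀, rfl⟩
      · -- Case j = 0 : the first output coordinate is constant on the face.
        set S := {cc : Fin (d+1) → ℕ |
          (anisoCell (d+1) β L cc ∩ F '' face a b 0 t).Nonempty} with hS
        have hv : ∀ x ∈ face a b 0 t, F x 0 = F (fun _ => t) 0 := by
          intro x hx
          refine hdep 0 x (fun _ => t) ?_
          intro k hk
          have hk0 : k = 0 := le_antisymm hk (Fin.zero_le _)
          subst hk0
          exact hx.2
        have hkey : ∀ cc ∈ S, cc 0 = ⌊F (fun _ => t) 0 * ((L ^ (β ^ d) : ℕ) : ℝ)⌋₊ := by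
          intro cc hcc
          obtain ⟨y, hycell, x, hxf, rfl⟩ := hcc
          have h0 := (mem_anisoCell.mp hycell 0).1
          have h1 := (mem_anisoCell.mp hycell 0).2
          have he : (d + 1 - 1 - ((0 : Fin (d+1)) : ℕ)) = d := by simp
          rw [he] at h0 h1
          have hcast : ((L ^ (β ^ d) : ℕ) : ℝ) = (L:ℝ) ^ (β ^ d) := by push_cast; ring
          rw [← hv x hxf]
          refine cell_idx_eq (pow_pos hL0 _) ?_ ?_ <;> rw [hcast] <;> assumption
        have hlt : ∀ cc ∈ S, ∀ i' : Fin d, cc i'.succ < L ^ (β ^ (d - 1 - (i' : ℕ))) := by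
          intro cc hcc i'
          have h := counted_lt hL0 hYIco hcc i'.succ
          have he : d + 1 - 1 - ((i'.succ : Fin (d+1)) : ℕ) = d - 1 - (i' : ℕ) := by
            simp only [Fin.val_succ]
            omega
          rwa [he] at h
        have hmain : S.ncard ≤
            (Set.univ : Set (∀ i' : Fin d, Fin (L ^ (β ^ (d - 1 - (i' : ℕ)))))).ncard := by
          apply Set.ncard_le_ncard_of_injOn
            (fun cc (i' : Fin d) => (⟨min (cc i'.succ) (L ^ (β ^ (d - 1 - (i' : ℕ))) - 1),
              by have := pow_pos hL0 (β ^ (d - 1 - (i' : ℕ))); omega⟩ : Fin _))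
          · exact fun cc _ => Set.mem_univ _
          · intro cc hcc dd hdd heq
            funext i
            rcases Fin.eq_zero_or_eq_succ i with rfl | ⟨i', rfl⟩
            · rw [hkey cc hcc, hkey dd hdd]
            · have h := congrFun heq i'
              simp only [Fin.mk.injEq] at h
              have b1 := hlt cc hcc i'
              have b2 := hlt dd hdd i'
              omega
        have hcard : (Set.univ : Set (∀ i' : Fin d, Fin (L ^ (β ^ (d - 1 - (i' : ℕ)))))).ncard
            = L ^ (∑ i ∈ Finset.range d, β ^ i) := by
          rw [Set.ncard_univ, Nat.card_eq_fintype_card, Fintype.card_pi]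
          simp only [Fintype.card_fin]
          rw [Finset.prod_pow_eq_pow_sum]
          congr 1
          rw [Fin.sum_univ_eq_sum_range (fun k => β ^ (d - 1 - k)) d]
          exact Finset.sum_range_reflect (fun k => β ^ k) d
        have hc1 : (1:ℝ) ≤ (C + 2) * c₀ * ((2 * w + 1 : ℕ) : ℝ) ^ d + 1 :=
          le_add_of_nonneg_left (by positivity)
        calc (S.ncard : ℝ) ≤ ((L ^ (∑ i ∈ Finset.range d, β ^ i) : ℕ) : ℝ) := by
              exact_mod_cast hmain.trans_eq hcard
          _ = (L:ℝ) ^ (∑ i ∈ Finset.range d, β ^ i) := by push_cast; ring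
          _ ≤ (L:ℝ) ^ ((∑ i ∈ Finset.range (d+1), β ^ i) - 1) := by
              apply pow_le_pow_right₀ hL1.le
              have h1 : 1 ≤ β ^ d := Nat.one_le_pow d β (by omega)
              rw [Finset.sum_range_succ]
              omega
          _ ≤ ((C + 2) * c₀ * ((2 * w + 1 : ℕ) : ℝ) ^ d + 1) *
              (L:ℝ) ^ ((∑ i ∈ Finset.range (d+1), β ^ i) - 1) :=
              le_mul_of_one_le_left (by positivity) hc1
      · -- Case j = j₀.succ
        have hd1 : 0 < d := j₀.pos
        set S := {cc : Fin (d+1) → ℕ |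
          (anisoCell (d+1) β L cc ∩ F '' face a b j₀.succ t).Nonempty} with hS
        set N : ℕ := L ^ (β ^ d) with hN
        have hNpos : 0 < N := pow_pos hL0 _
        set δ : ℝ := ((L:ℝ) ^ (β ^ d))⁻¹ with hδ
        have hδpos : 0 < δ := by rw [hδ]; positivity
        have hNcast : (N:ℝ) = (L:ℝ) ^ (β ^ d) := by rw [hN]; push_cast; ring
        have hNδ : (N:ℝ) * δ = 1 := by
          rw [hδ, hNcast, mul_inv_cancel₀ (by positivity)]
        have hab0 := hab 0
        set g : ℕ → ℝ := fun n => min (a 0 + n * δ) (b 0) with hg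
        have hg0 : ∀ n, 0 ≤ g n := fun n =>
          le_min (add_nonneg hab0.1 (by positivity)) (hab0.1.trans hab0.2.1)
        have hgb : ∀ n, g n ≤ b 0 := fun n => min_le_right _ _
        have hg1 : ∀ n, g n ≤ 1 := fun n => (hgb n).trans hab0.2.2.le
        have hgIcc : ∀ n, g n ∈ Set.Icc (0:ℝ) 1 := fun n => ⟨hg0 n, hg1 n⟩
        have hgmono : Monotone g := by
          intro m n hmn
          apply min_le_min _ le_rfl
          have : (m:ℝ) ≤ (n:ℝ) := by exact_mod_cast hmn
          nlinarith
        have hgstep : ∀ n, g (n+1) ≤ g n + δ := by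
          intro n
          rw [hg]
          simp only
          rw [← min_add_add_right]
          apply min_le_min _ (by linarith)
          push_cast
          apply le_of_eq
          ring
        set z : Fin (d+1) → ℝ := fun _ => 0 with hz
        have hzc : z ∈ cubeIcc (d+1) := by
          simp only [cubeIcc, Set.mem_pi, Set.mem_univ, forall_true_left, hz]
          exact fun i => ⟨le_rfl, zero_le_one⟩
        set φ : ℝ → ℝ := fun s => F (Function.update z 0 s) 0 with hφ
        have hφmono : MonotoneOn φ (Set.Icc 0 1) := hmono 0 z hzc
        have hφeq : ∀ x : Fin (d+1) → ℝ, F x 0 = φ (x 0) := by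
          intro x
          refine hdep 0 x (Function.update z 0 (x 0)) (fun k hk => ?_)
          have hk0 : k = 0 := le_antisymm hk (Fin.zero_le _)
          subst hk0
          simp
        set ψ : ℕ → ℝ := fun n => max (φ (g n)) 0 * (L:ℝ) ^ (β ^ d) with hψ
        have hψmono : Monotone ψ := by
          intro m n hmn
          apply mul_le_mul_of_nonneg_right _ (by positivity)
          exact max_le_max (hφmono (hgIcc m) (hgIcc n) (hgmono hmn)) le_rfl
        have hψ0 : ∀ n, 0 ≤ ψ n := fun n =>
          mul_nonneg (le_max_right _ _) (by positivity)
        set P : ℕ → Set (Fin (d+1) → ℝ) := fun n =>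
          {x | x ∈ face a b j₀.succ t ∧ g n ≤ x 0 ∧ x 0 ≤ g (n+1)} with hP
        set T : ℕ → Set (Fin (d+1) → ℕ) := fun n =>
          {cc | (anisoCell (d+1) β L cc ∩ F '' P n).Nonempty} with hT
        have hPsub : ∀ n, P n ⊆ face a b j₀.succ t := fun n x hx => hx.1
        have hTIco : ∀ n, F '' P n ⊆ cubeIco (d+1) := fun n =>
          (Set.image_mono (f := F) (hPsub n)).trans (Set.image_subset_iff.mpr
            (fun x hx => hmaps (hfaceIco hx)))
        have hTfin : ∀ n, (T n).Finite := fun n => counted_finite hL0 (hTIco n)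
        have hcover : S ⊆ ⋃ n ∈ Finset.range N, T n := by
          rintro cc ⟨y, hycell, x, hxf, rfl⟩
          have hx0a : a 0 ≤ x 0 := (hxf.1 0).1
          have hx0b : x 0 ≤ b 0 := (hxf.1 0).2
          set n : ℕ := ⌊(x 0 - a 0) * (L:ℝ) ^ (β ^ d)⌋₊ with hn
          have hnonneg : 0 ≤ (x 0 - a 0) * (L:ℝ) ^ (β ^ d) := by
            apply mul_nonneg (by linarith) (by positivity)
          have hfl := Nat.floor_le hnonneg
          have hfu := Nat.lt_floor_add_one ((x 0 - a 0) * (L:ℝ) ^ (β ^ d))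
          have hLE : (0:ℝ) < (L:ℝ) ^ (β ^ d) := by positivity
          have hδL : δ * (L:ℝ) ^ (β ^ d) = 1 := by
            rw [hδ, inv_mul_cancel₀ (by positivity)]
          have hnN : n < N := by
            rw [hn]
            apply (Nat.floor_lt hnonneg).mpr
            calc (x 0 - a 0) * (L:ℝ) ^ (β ^ d) < 1 * (L:ℝ) ^ (β ^ d) := by
                  apply mul_lt_mul_of_pos_right (by linarith [hab0.1, hab0.2.2]) hLE
              _ = (N:ℝ) := by rw [one_mul, hNcast]
          refine Set.mem_biUnion (Finset.mem_range.mpr hnN) ⟨F x, hycell, x, ⟨hxf, ?_, ?_⟩, rfl⟩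
          · calc g n ≤ a 0 + n * δ := min_le_left _ _
              _ ≤ x 0 := by nlinarith
          · apply le_min _ hx0b
            push_cast
            nlinarith
        set W : ℝ := ((2 * w + 1 : ℕ) : ℝ) ^ d with hW
        have hWpos : 0 < W := by rw [hW]; positivity
        set B : ℝ := c₀ * (L:ℝ) ^ ((∑ i ∈ Finset.range d, β ^ i) - 1) * W with hB
        have hBpos : 0 < B := by rw [hB]; positivity
        have hpiece : ∀ n, ((T n).ncard : ℝ) ≤ (ψ (n+1) - ψ n + 2) * B := by
          intro n
          classical
          set G : (Fin d → ℝ) → (Fin d → ℝ) := fun x' => Fin.tail (F (Fin.cons (g n) x')) with hG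
          have hgnIcc : g n ∈ Set.Icc (0:ℝ) 1 := hgIcc n
          have hgnIco : g n ∈ Set.Ico (0:ℝ) 1 := ⟨hg0 n, (hgb n).trans_lt hab0.2.2⟩
          have hGdep : ∀ (i : Fin d) (x y : Fin d → ℝ), (∀ k, k ≤ i → x k = y k) → G x i = G y i := by
            intro i x y hxy
            show F (Fin.cons (g n) x) i.succ = F (Fin.cons (g n) y) i.succ
            apply hdep i.succ
            intro k hk
            rcases Fin.eq_zero_or_eq_succ k with rfl | ⟨k', rfl⟩
            · simp
            · simp only [Fin.cons_succ]
              exact hxy k' (by rwa [Fin.succ_le_succ_iff] at hk)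
          have hGmono : ∀ (i : Fin d), ∀ x ∈ cubeIcc d,
              MonotoneOn (fun s : ℝ => G (Function.update x i s) i) (Set.Icc (0:ℝ) 1) := by
            intro i x hx
            have hcons : Fin.cons (g n) x ∈ cubeIcc (d+1) := cons_mem_cubeIcc hgnIcc hx
            have h1 := hmono i.succ _ hcons
            have h2 : ∀ s : ℝ, G (Function.update x i s) i
                = F (Function.update (Fin.cons (g n) x) i.succ s) i.succ := by
              intro s
              show F (Fin.cons (g n) (Function.update x i s)) i.succ = _
              rw [Fin.cons_update]
            intro u hu v hv huv
            simp only
            rw [h2 u, h2 v]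
            exact h1 hu hv huv
          have hGHol : ∀ x ∈ cubeIcc d, ∀ y ∈ cubeIcc d, ∀ i : Fin d,
              |G x i - G y i| ≤ C * ‖x - y‖ ^ κ := by
            intro x hx y hy i
            have h1 := hHol (Fin.cons (g n) x) (cons_mem_cubeIcc hgnIcc hx)
              (Fin.cons (g n) y) (cons_mem_cubeIcc hgnIcc hy) i.succ
            have h2 : ‖(Fin.cons (g n) x : Fin (d+1) → ℝ) - (Fin.cons (g n) y : Fin (d+1) → ℝ)‖
                ≤ ‖x - y‖ := by
              apply norm_le_of_coords (norm_nonneg _)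
              intro k
              rcases Fin.eq_zero_or_eq_succ k with rfl | ⟨k', rfl⟩
              · simp
              · simp only [Pi.sub_apply, Fin.cons_succ]
                have h3 := norm_le_pi_norm (x - y) k'
                simpa [Real.norm_eq_abs] using h3
            refine h1.trans ?_
            apply mul_le_mul_of_nonneg_left _ hC
            exact Real.rpow_le_rpow (norm_nonneg _) h2 hκ0.le
          have hGmaps : Set.MapsTo G (cubeIco d) (cubeIco d) := by
            intro x hx
            have h1 := hmaps (cons_mem_cubeIco hgnIco hx)
            simp only [cubeIco, Set.mem_pi, Set.mem_univ, forall_true_left] at h1 ⊢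
            intro i
            exact h1 i.succ
          have hab' : ∀ i : Fin d,
              0 ≤ Fin.tail a i ∧ Fin.tail a i ≤ Fin.tail b i ∧ Fin.tail b i < 1 :=
            fun i => hab i.succ
          have hchild := Hc₀ L hL G hGdep hGmono hGHol hGmaps (Fin.tail a) (Fin.tail b) hab'
            j₀ t hta htb
          set Tc : Set (Fin d → ℕ) :=
            {cc' | (anisoCell d β L cc' ∩ G '' face (Fin.tail a) (Fin.tail b) j₀ t).Nonempty}
            with hTcdef
          have hTcIco : G '' face (Fin.tail a) (Fin.tail b) j₀ t ⊆ cubeIco d := by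
            rintro y ⟨x', hx', rfl⟩
            exact hGmaps (face_subset_cubeIco hab' hx')
          have hTcfin : Tc.Finite := counted_finite hL0 hTcIco
          have hTcB : (Tc.ncard : ℝ) ≤ c₀ * (L:ℝ) ^ ((∑ i ∈ Finset.range d, β ^ i) - 1) := hchild
          have hwit : ∀ cc : Fin (d+1) → ℕ, cc ∈ T n →
              ∃ x, x ∈ P n ∧ F x ∈ anisoCell (d+1) β L cc := by
            rintro cc ⟨y, hy1, x, hx, rfl⟩
            exact ⟨x, hx, hy1⟩
          choose! X hX1 hX2 using hwit
          set cidx : (Fin (d+1) → ℕ) → Fin d → ℕ := fun cc i' =>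
            ⌊G (Fin.tail (X cc)) i' * ((L ^ (β ^ (d - 1 - (i' : ℕ))) : ℕ) : ℝ)⌋₊ with hcidx
          have hcast : ∀ e : ℕ, ((L ^ e : ℕ) : ℝ) = (L:ℝ) ^ e := fun e => by push_cast; ring
          have hfacts : ∀ cc ∈ T n,
              (cc 0 ∈ Set.Icc ⌊ψ n⌋₊ ⌊ψ (n+1)⌋₊) ∧ cidx cc ∈ Tc ∧
              (∀ i' : Fin d, cidx cc i' ≤ cc i'.succ + w ∧ cc i'.succ ≤ cidx cc i' + w) := by
            intro cc hcc
            have hx1 : X cc ∈ P n := hX1 cc hcc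
            have hx2 : F (X cc) ∈ anisoCell (d+1) β L cc := hX2 cc hcc
            set x := X cc with hxdef
            have hxface : x ∈ face a b j₀.succ t := hx1.1
            have hxIcc : x ∈ cubeIcc (d+1) := hfaceIcc hxface
            have hxIco : x ∈ cubeIco (d+1) := hfaceIco hxface
            have hyIco : F x ∈ cubeIco (d+1) := hmaps hxIco
            have hy0 : 0 ≤ F x 0 ∧ F x 0 < 1 := by
              simp only [cubeIco, Set.mem_pi, Set.mem_univ, forall_true_left] at hyIco
              exact hyIco 0
            have hx0Icc : x 0 ∈ Set.Icc (0:ℝ) 1 :=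
              ⟨hab0.1.trans (hxface.1 0).1, (hxface.1 0).2.trans hab0.2.2.le⟩
            have hyφ : F x 0 = φ (x 0) := hφeq x
            have hφlo : φ (g n) ≤ F x 0 := by
              rw [hyφ]; exact hφmono (hgIcc n) hx0Icc hx1.2.1
            have hφhi : F x 0 ≤ φ (g (n+1)) := by
              rw [hyφ]; exact hφmono hx0Icc (hgIcc (n+1)) hx1.2.2
            have hcc0 : cc 0 = ⌊F x 0 * ((L ^ (β ^ d) : ℕ) : ℝ)⌋₊ := by
              have h0 := mem_anisoCell.mp hx2 0
              have he0 : (d + 1 - 1 - ((0 : Fin (d+1)) : ℕ)) = d := by simp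
              rw [he0] at h0
              exact cell_idx_eq (pow_pos hL0 _) (by rw [hcast]; exact h0.1)
                (by rw [hcast]; exact h0.2)
            have hIcc0 : cc 0 ∈ Set.Icc ⌊ψ n⌋₊ ⌊ψ (n+1)⌋₊ := by
              rw [hcc0]
              constructor
              · apply Nat.floor_le_floor
                simp only [hψ]
                rw [hcast]
                exact mul_le_mul_of_nonneg_right (max_le hφlo hy0.1) (by positivity)
              · apply Nat.floor_le_floor
                simp only [hψ]
                rw [hcast]
                exact mul_le_mul_of_nonneg_right (le_max_of_le_left hφhi) (by positivity)
            set x' : Fin d → ℝ := Fin.tail x with hx'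
            have hx'face : x' ∈ face (Fin.tail a) (Fin.tail b) j₀ t := by
              refine ⟨fun i' => ⟨(hxface.1 i'.succ).1, (hxface.1 i'.succ).2⟩, ?_⟩
              show x j₀.succ = t
              exact hxface.2
            have hx'Icc : x' ∈ cubeIcc d := by
              simp only [cubeIcc, Set.mem_pi, Set.mem_univ, forall_true_left] at hxIcc ⊢
              exact fun i' => hxIcc i'.succ
            have hx'Ico : x' ∈ cubeIco d := by
              simp only [cubeIco, Set.mem_pi, Set.mem_univ, forall_true_left] at hxIco ⊢
              exact fun i' => hxIco i'.succ
            have hy' : G x' ∈ cubeIco d := hGmaps hx'Ico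
            have hy'mem : ∀ i', 0 ≤ G x' i' ∧ G x' i' < 1 := by
              simp only [cubeIco, Set.mem_pi, Set.mem_univ, forall_true_left] at hy'
              exact hy'
            have hdelta : ∀ i : Fin (d+1), |x i - (Fin.cons (g n) x' : Fin (d+1) → ℝ) i| ≤ δ := by
              intro i
              rcases Fin.eq_zero_or_eq_succ i with rfl | ⟨k', rfl⟩
              · simp only [Fin.cons_zero]
                rw [abs_le]
                have hst := hgstep n
                exact ⟨by linarith [hx1.2.1, hδpos.le], by linarith [hx1.2.2]⟩
              · simp only [Fin.cons_succ]
                show |x k'.succ - x' k'| ≤ δ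
                have : x' k' = x k'.succ := rfl
                rw [this, sub_self, abs_zero]
                exact hδpos.le
            have hFdist : ∀ i, |F x i - F (Fin.cons (g n) x') i| ≤ C * δ ^ κ := by
              intro i
              have h1 := hHol x hxIcc _ (cons_mem_cubeIcc hgnIcc hx'Icc) i
              refine h1.trans ?_
              apply mul_le_mul_of_nonneg_left _ hC
              exact Real.rpow_le_rpow (norm_nonneg _) (norm_le_of_coords hδpos.le hdelta) hκ0.le
            have hTcmem : cidx cc ∈ Tc := by
              refine ⟨G x', ?_, x', hx'face, rfl⟩
              rw [mem_anisoCell]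
              intro i'
              have hy'i := hy'mem i'
              have hf := floor_cell_mem (pow_pos hL0 (β ^ (d - 1 - (i' : ℕ)))) hy'i.1 hy'i.2
              have hcx : cidx cc i' = ⌊G x' i' * ((L ^ (β ^ (d - 1 - (i' : ℕ))) : ℕ) : ℝ)⌋₊ := rfl
              rw [hcx, ← hcast]
              exact ⟨hf.1, hf.2.1⟩
            have hwind : ∀ i' : Fin d,
                cidx cc i' ≤ cc i'.succ + w ∧ cc i'.succ ≤ cidx cc i' + w := by
              intro i'
              set e : ℕ := β ^ (d - 1 - (i' : ℕ)) with he
              have hZ : (0:ℝ) < (L:ℝ) ^ e := by positivity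
              have hpar := mem_anisoCell.mp hx2 i'.succ
              have hee : d + 1 - 1 - ((i'.succ : Fin (d+1)) : ℕ) = d - 1 - (i' : ℕ) := by
                simp only [Fin.val_succ]; omega
              rw [hee] at hpar
              have hA1 : (cc i'.succ : ℝ) ≤ F x i'.succ * (L:ℝ) ^ e := by
                have h := mul_le_mul_of_nonneg_right hpar.1 hZ.le
                rwa [mul_assoc, inv_mul_cancel₀ hZ.ne', mul_one] at h
              have hA2 : F x i'.succ * (L:ℝ) ^ e < (cc i'.succ : ℝ) + 1 := by
                have h := mul_lt_mul_of_pos_right hpar.2 hZ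
                rwa [mul_assoc, inv_mul_cancel₀ hZ.ne', mul_one] at h
              have hy'i := hy'mem i'
              have hcx : cidx cc i' = ⌊G x' i' * ((L ^ e : ℕ) : ℝ)⌋₊ := rfl
              have hfl2 : (cidx cc i' : ℝ) ≤ G x' i' * (L:ℝ) ^ e := by
                rw [hcx, ← hcast e]
                exact Nat.floor_le (mul_nonneg hy'i.1 (by positivity))
              have hfu2 : G x' i' * (L:ℝ) ^ e < (cidx cc i' : ℝ) + 1 := by
                rw [hcx, ← hcast e]
                exact Nat.lt_floor_add_one _
              have hGdist : |F x i'.succ - G x' i'| ≤ C * δ ^ κ := hFdist i'.succ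
              have hkey : δ ^ κ * (L:ℝ) ^ e ≤ 1 :=
                key_exp hL hβ1 hd1 (he ▸ Nat.pow_le_pow_right (by omega) (by omega)) hκ0 hβκ
              have hCd : C * δ ^ κ * (L:ℝ) ^ e ≤ C := by
                rw [mul_assoc]
                calc C * (δ ^ κ * (L:ℝ) ^ e) ≤ C * 1 := mul_le_mul_of_nonneg_left hkey hC
                  _ = C := mul_one C
              have hu' : |G x' i' * (L:ℝ) ^ e - F x i'.succ * (L:ℝ) ^ e| ≤ C := by
                rw [← sub_mul, abs_mul, abs_of_nonneg hZ.le]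
                calc |G x' i' - F x i'.succ| * (L:ℝ) ^ e
                    ≤ (C * δ ^ κ) * (L:ℝ) ^ e := by
                      apply mul_le_mul_of_nonneg_right _ hZ.le
                      rw [abs_sub_comm]
                      exact hGdist
                  _ ≤ C := hCd
              have hCw : C + 1 ≤ (w : ℝ) := by
                rw [hw]
                push_cast
                linarith [Nat.le_ceil C]
              have habs := abs_le.mp hu'
              have hCw' : C ≤ (⌈C⌉₊ : ℝ) := Nat.le_ceil C
              constructor
              · have h1 : (cidx cc i' : ℝ) < ((cc i'.succ + w : ℕ) : ℝ) := by
                  push_cast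
                  linarith
                have h2 : cidx cc i' < cc i'.succ + w := by exact_mod_cast h1
                omega
              · have h1 : (cc i'.succ : ℝ) < ((cidx cc i' + w : ℕ) : ℝ) := by
                  push_cast
                  linarith
                have h2 : cc i'.succ < cidx cc i' + w := by exact_mod_cast h1
                omega
            exact ⟨hIcc0, hTcmem, hwind⟩
          set f : (Fin (d+1) → ℕ) → ℕ × (Fin d → ℕ) × (Fin d → Fin (2*w+1)) := fun cc =>
            (cc 0, cidx cc, fun i' => ⟨min (cc i'.succ + w - cidx cc i') (2*w),
              Nat.lt_succ_of_le (min_le_right _ _)⟩) with hfdef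
          have hcount : (T n).ncard ≤
              ((Set.Icc ⌊ψ n⌋₊ ⌊ψ (n+1)⌋₊) ×ˢ
                (Tc ×ˢ (Set.univ : Set (Fin d → Fin (2*w+1))))).ncard := by
            refine Set.ncard_le_ncard_of_injOn f ?_ ?_ ?_
            · intro cc hcc
              obtain ⟨h1, h2, _⟩ := hfacts cc hcc
              exact ⟨h1, h2, Set.mem_univ _⟩
            · intro cc hcc dd hdd heq
              obtain ⟨_, _, h3c⟩ := hfacts cc hcc
              obtain ⟨_, _, h3d⟩ := hfacts dd hdd
              have e0 : cc 0 = dd 0 := congrArg Prod.fst heq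
              have e1 : cidx cc = cidx dd := congrArg (fun p => p.2.1) heq
              funext i
              rcases Fin.eq_zero_or_eq_succ i with rfl | ⟨i', rfl⟩
              · exact e0
              · have e2 : min (cc i'.succ + w - cidx cc i') (2*w)
                    = min (dd i'.succ + w - cidx dd i') (2*w) := by
                  have h := congrFun (congrArg (fun p => p.2.2) heq) i'
                  exact congrArg Fin.val h
                have e1' : cidx cc i' = cidx dd i' := congrFun e1 i'
                have b1 := h3c i'
                have b2 := h3d i'
                omega
            · exact (Set.finite_Icc _ _).prod (hTcfin.prod Set.finite_univ)
          have hprod : ((Set.Icc ⌊ψ n⌋₊ ⌊ψ (n+1)⌋₊) ×ˢ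
              (Tc ×ˢ (Set.univ : Set (Fin d → Fin (2*w+1))))).ncard
              = (⌊ψ (n+1)⌋₊ + 1 - ⌊ψ n⌋₊) * (Tc.ncard * (2*w+1)^d) := by
            rw [ncard_prod', ncard_prod']
            congr 1
            · rw [← Finset.coe_Icc, Set.ncard_coe_finset, Nat.card_Icc]
            · congr 1
              rw [Set.ncard_univ, Nat.card_eq_fintype_card]
              simp [Fintype.card_pi, Fintype.card_fin]
          have hfloor_le : ⌊ψ n⌋₊ ≤ ⌊ψ (n+1)⌋₊ := Nat.floor_le_floor (hψmono (Nat.le_succ n))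
          have hIccB : ((⌊ψ (n+1)⌋₊ + 1 - ⌊ψ n⌋₊ : ℕ) : ℝ) ≤ ψ (n+1) - ψ n + 2 := by
            rw [Nat.cast_sub (by omega)]
            push_cast
            have f1 : (⌊ψ (n+1)⌋₊ : ℝ) ≤ ψ (n+1) := Nat.floor_le (hψ0 _)
            have f2 : ψ n < ⌊ψ n⌋₊ + 1 := Nat.lt_floor_add_one _
            linarith
          have hψd2 : 0 ≤ ψ (n+1) - ψ n + 2 := by
            have := hψmono (Nat.le_succ n)
            linarith
          calc ((T n).ncard : ℝ)
              ≤ (((⌊ψ (n+1)⌋₊ + 1 - ⌊ψ n⌋₊) * (Tc.ncard * (2*w+1)^d) : ℕ) : ℝ) := by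
                exact_mod_cast hcount.trans_eq hprod
            _ = ((⌊ψ (n+1)⌋₊ + 1 - ⌊ψ n⌋₊ : ℕ) : ℝ) *
                ((Tc.ncard : ℝ) * ((2*w+1 : ℕ) : ℝ) ^ d) := by
                rw [Nat.cast_mul, Nat.cast_mul, Nat.cast_pow]
            _ ≤ (ψ (n+1) - ψ n + 2) *
                ((c₀ * (L:ℝ) ^ ((∑ i ∈ Finset.range d, β ^ i) - 1)) * ((2*w+1 : ℕ) : ℝ) ^ d) := by
                apply mul_le_mul hIccB ?_ (by positivity) hψd2
                exact mul_le_mul_of_nonneg_right hTcB (by positivity)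
            _ = (ψ (n+1) - ψ n + 2) * B := by
                rw [hB, hW]
        have hψN : ψ N - ψ 0 ≤ C * (L:ℝ) ^ (β ^ d) := by
          have h1 : |φ (g N) - φ (g 0)| ≤ C := by
            have hm1 : Function.update z 0 (g N) ∈ cubeIcc (d+1) := by
              simp only [cubeIcc, Set.mem_pi, Set.mem_univ, forall_true_left]
              intro i
              rcases eq_or_ne i 0 with rfl | hne
              · simpa using hgIcc N
              · simp [Function.update_of_ne hne, hz]
            have hm2 : Function.update z 0 (g 0) ∈ cubeIcc (d+1) := by
              simp only [cubeIcc, Set.mem_pi, Set.mem_univ, forall_true_left]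
              intro i
              rcases eq_or_ne i 0 with rfl | hne
              · simpa using hgIcc 0
              · simp [Function.update_of_ne hne, hz]
            have h2 := hHol _ hm1 _ hm2 0
            refine h2.trans ?_
            have h3 : ‖Function.update z 0 (g N) - Function.update z 0 (g 0)‖ ≤ 1 := by
              apply norm_le_of_coords zero_le_one
              intro i
              rcases eq_or_ne i 0 with rfl | hne
              · simp only [Pi.sub_apply, Function.update_self]
                rw [abs_le]
                exact ⟨by linarith [hg0 N, hg1 0], by linarith [hg1 N, hg0 0]⟩
              · simp [Pi.sub_apply, Function.update_of_ne hne]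
            calc C * ‖_ - _‖ ^ κ ≤ C * 1 := by
                  apply mul_le_mul_of_nonneg_left _ hC
                  exact Real.rpow_le_one (norm_nonneg _) h3 hκ0.le
              _ = C := mul_one C
          have h4 : max (φ (g N)) 0 - max (φ (g 0)) 0 ≤ |φ (g N) - φ (g 0)| := by
            have h5 : max (φ (g N)) 0 ≤ max (φ (g 0)) 0 + |φ (g N) - φ (g 0)| := by
              apply max_le
              · calc φ (g N) = φ (g 0) + (φ (g N) - φ (g 0)) := by ring
                  _ ≤ max (φ (g 0)) 0 + |φ (g N) - φ (g 0)| :=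
                    add_le_add (le_max_left _ _) (le_abs_self _)
              · exact add_nonneg (le_max_right _ _) (abs_nonneg _)
            linarith
          rw [hψ]
          simp only
          rw [← sub_mul]
          apply mul_le_mul_of_nonneg_right (h4.trans h1) (by positivity)
        calc (S.ncard : ℝ) ≤ ((⋃ n ∈ Finset.range N, T n).ncard : ℝ) := by
              exact_mod_cast Set.ncard_le_ncard hcover
                (Set.Finite.biUnion (Finset.range N).finite_toSet (fun n _ => hTfin n))
          _ ≤ ∑ n ∈ Finset.range N, ((T n).ncard : ℝ) := by
              exact_mod_cast ncard_biUnion_le (Finset.range N) T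
          _ ≤ ∑ n ∈ Finset.range N, (ψ (n+1) - ψ n + 2) * B :=
              Finset.sum_le_sum (fun n _ => hpiece n)
          _ = (ψ N - ψ 0 + 2 * N) * B := by
              rw [← Finset.sum_mul]
              congr 1
              rw [Finset.sum_add_distrib, Finset.sum_range_sub ψ N, Finset.sum_const,
                Finset.card_range]
              rw [nsmul_eq_mul, hNcast]
              ring
          _ ≤ ((C + 2) * (L:ℝ) ^ (β ^ d)) * B := by
              apply mul_le_mul_of_nonneg_right _ hBpos.le
              rw [hNcast]
              linarith [hψN]
          _ = ((C + 2) * c₀ * ((2 * w + 1 : ℕ) : ℝ) ^ d) *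
              ((L:ℝ) ^ (β ^ d) * (L:ℝ) ^ ((∑ i ∈ Finset.range d, β ^ i) - 1)) := by
              rw [hB, hW]; ring
          _ = ((C + 2) * c₀ * ((2 * w + 1 : ℕ) : ℝ) ^ d) *
              (L:ℝ) ^ ((∑ i ∈ Finset.range (d+1), β ^ i) - 1) := by
              congr 1
              rw [← pow_add]
              congr 1
              have h1 : ∑ i ∈ Finset.range (d+1), β ^ i = ∑ i ∈ Finset.range d, β ^ i + β ^ d :=
                Finset.sum_range_succ _ _
              have h2 : 1 ≤ ∑ i ∈ Finset.range d, β ^ i := by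
                calc 1 = ∑ i ∈ Finset.range 1, β ^ i := by simp
                  _ ≤ ∑ i ∈ Finset.range d, β ^ i := by
                      apply Finset.sum_le_sum_of_subset
                      exact Finset.range_subset_range.mpr hd1
              omega
          _ ≤ ((C + 2) * c₀ * ((2 * w + 1 : ℕ) : ℝ) ^ d + 1) *
              (L:ℝ) ^ ((∑ i ∈ Finset.range (d+1), β ^ i) - 1) := by
              apply mul_le_mul_of_nonneg_right (by linarith) (by positivity)

end BICCAux

theorem boundary_image_cell_count'
    {d : ℕ} (hd : 1 ≤ d)
    (F : (Fin d → ℝ) → (Fin d → ℝ))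
    (hdep : ∀ (i : Fin d) (x y : Fin d → ℝ), (∀ j, j ≤ i → x j = y j) → F x i = F y i)
    (hsm : ∀ (i : Fin d), ∀ x ∈ cubeIcc d,
      StrictMonoOn (fun s : ℝ => F (Function.update x i s) i) (Set.Icc (0 : ℝ) 1))
    (hbij : Set.BijOn F (cubeIco d) (cubeIco d))
    (κ : ℝ) (hκ : κ ∈ Set.Ioc (0 : ℝ) 1)
    (C : ℝ) (hC : 0 ≤ C)
    (hHolder : ∀ x ∈ cubeIcc d, ∀ y ∈ cubeIcc d, ‖F x - F y‖ ≤ C * ‖x - y‖ ^ κ) :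
    ∃ c : ℝ, 0 < c ∧ ∀ (L : ℕ), 2 ≤ L → ∀ a b : Fin d → ℝ, IsGoodBox a b →
      ({cc : Fin d → ℕ | (∀ i : Fin d, cc i < L ^ (⌈κ⁻¹⌉₊ ^ (d - 1 - (i : ℕ)))) ∧
          (anisoCell d ⌈κ⁻¹⌉₊ L cc ∩ F '' frontier (clBox a b)).Nonempty}.ncard : ℝ) ≤
        c * (L : ℝ) ^ ((∑ i ∈ Finset.range d, ⌈κ⁻¹⌉₊ ^ i) - 1) := by
  obtain ⟨hκ0, hκ1⟩ := hκ
  have hβκ : 1 ≤ ((⌈κ⁻¹⌉₊ : ℕ) : ℝ) * κ := by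
    have h1 : κ⁻¹ ≤ ((⌈κ⁻¹⌉₊ : ℕ) : ℝ) := Nat.le_ceil _
    have h2 : κ⁻¹ * κ = 1 := inv_mul_cancel₀ (ne_of_gt hκ0)
    nlinarith
  obtain ⟨c₀, hc₀, H⟩ := BICCAux.count_face d κ C ⌈κ⁻¹⌉₊ hκ0 hκ1 hC hβκ
  refine ⟨2 * d * c₀ + 1, by positivity, ?_⟩
  intro L hL a b hab
  have hL0 : 0 < L := by omega
  have hab' : ∀ i, 0 ≤ a i ∧ a i ≤ b i ∧ b i < 1 := fun i =>
    ⟨(hab i).1, (hab i).2.1.le, (hab i).2.2⟩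
  have hmono : ∀ (i : Fin d), ∀ x ∈ cubeIcc d,
      MonotoneOn (fun s : ℝ => F (Function.update x i s) i) (Set.Icc (0:ℝ) 1) :=
    fun i x hx => (hsm i x hx).monotoneOn
  have hHol' : ∀ x ∈ cubeIcc d, ∀ y ∈ cubeIcc d, ∀ i, |F x i - F y i| ≤ C * ‖x - y‖ ^ κ := by
    intro x hx y hy i
    have h1 := norm_le_pi_norm (F x - F y) i
    simp only [Pi.sub_apply, Real.norm_eq_abs] at h1
    exact h1.trans (hHolder x hx y hy)
  have hmaps := hbij.mapsTo
  set T1 : Fin d → Set (Fin d → ℕ) := fun j =>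
    {cc | (anisoCell d ⌈κ⁻¹⌉₊ L cc ∩ F '' BICCAux.face a b j (a j)).Nonempty} with hT1
  set T2 : Fin d → Set (Fin d → ℕ) := fun j =>
    {cc | (anisoCell d ⌈κ⁻¹⌉₊ L cc ∩ F '' BICCAux.face a b j (b j)).Nonempty} with hT2
  have hT1fin : ∀ j, (T1 j).Finite := fun j =>
    BICCAux.counted_finite hL0 (fun y ⟨x, hx, hxy⟩ =>
      hxy ▸ hmaps (BICCAux.face_subset_cubeIco hab' hx))
  have hT2fin : ∀ j, (T2 j).Finite := fun j =>
    BICCAux.counted_finite hL0 (fun y ⟨x, hx, hxy⟩ =>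
      hxy ▸ hmaps (BICCAux.face_subset_cubeIco hab' hx))
  have hfr : frontier (clBox a b) ⊆
      ⋃ j : Fin d, (BICCAux.face a b j (a j) ∪ BICCAux.face a b j (b j)) := by
    intro x hx
    have hcl : IsClosed (clBox a b) := isClosed_set_pi (fun i _ => isClosed_Icc)
    have hx1 : x ∈ clBox a b := by
      have := frontier_subset_closure (s := clBox a b) hx
      rwa [hcl.closure_eq] at this
    have hx2 : x ∉ interior (clBox a b) := hx.2
    have hint : interior (clBox a b) = Set.univ.pi (fun i => Set.Ioo (a i) (b i)) := by
      rw [clBox, interior_pi_set Set.finite_univ]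
      simp only [interior_Icc]
    rw [hint] at hx2
    simp only [Set.mem_pi, Set.mem_univ, forall_true_left, Set.mem_Ioo] at hx2
    push_neg at hx2
    obtain ⟨j, hj⟩ := hx2
    simp only [clBox, Set.mem_pi, Set.mem_univ, forall_true_left, Set.mem_Icc] at hx1
    have hxj : x j = a j ∨ x j = b j := by
      rcases lt_or_eq_of_le (hx1 j).1 with h | h
      · exact Or.inr (le_antisymm (hx1 j).2 (hj h))
      · exact Or.inl h.symm
    refine Set.mem_iUnion.mpr ⟨j, ?_⟩
    rcases hxj with h | h
    · exact Or.inl ⟨fun i => hx1 i, h⟩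
    · exact Or.inr ⟨fun i => hx1 i, h⟩
  have hsub : {cc : Fin d → ℕ | (∀ i : Fin d, cc i < L ^ (⌈κ⁻¹⌉₊ ^ (d - 1 - (i : ℕ)))) ∧
      (anisoCell d ⌈κ⁻¹⌉₊ L cc ∩ F '' frontier (clBox a b)).Nonempty} ⊆
      ⋃ j ∈ Finset.univ (α := Fin d), (T1 j ∪ T2 j) := by
    rintro cc ⟨-, y, hyc, x, hxf, rfl⟩
    obtain ⟨j, hj⟩ := Set.mem_iUnion.mp (hfr hxf)
    refine Set.mem_biUnion (Finset.mem_univ j) ?_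
    rcases hj with h | h
    · exact Or.inl ⟨F x, hyc, x, h, rfl⟩
    · exact Or.inr ⟨F x, hyc, x, h, rfl⟩
  have hLex : (0:ℝ) ≤ (L : ℝ) ^ ((∑ i ∈ Finset.range d, ⌈κ⁻¹⌉₊ ^ i) - 1) := by positivity
  calc ({cc : Fin d → ℕ | (∀ i : Fin d, cc i < L ^ (⌈κ⁻¹⌉₊ ^ (d - 1 - (i : ℕ)))) ∧
      (anisoCell d ⌈κ⁻¹⌉₊ L cc ∩ F '' frontier (clBox a b)).Nonempty}.ncard : ℝ)
      ≤ ((⋃ j ∈ Finset.univ (α := Fin d), (T1 j ∪ T2 j)).ncard : ℝ) := by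
        exact_mod_cast Set.ncard_le_ncard hsub
          (Set.Finite.biUnion (Finset.univ (α := Fin d)).finite_toSet
            (fun j _ => (hT1fin j).union (hT2fin j)))
    _ ≤ ∑ j ∈ Finset.univ (α := Fin d), (((T1 j ∪ T2 j)).ncard : ℝ) := by
        exact_mod_cast BICCAux.ncard_biUnion_le (Finset.univ (α := Fin d)) _
    _ ≤ ∑ j ∈ Finset.univ (α := Fin d), (((T1 j).ncard : ℝ) + ((T2 j).ncard : ℝ)) := by
        apply Finset.sum_le_sum
        intro j _
        exact_mod_cast Set.ncard_union_le _ _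
    _ ≤ ∑ _j ∈ Finset.univ (α := Fin d),
        (c₀ * (L : ℝ) ^ ((∑ i ∈ Finset.range d, ⌈κ⁻¹⌉₊ ^ i) - 1) +
         c₀ * (L : ℝ) ^ ((∑ i ∈ Finset.range d, ⌈κ⁻¹⌉₊ ^ i) - 1)) := by
        apply Finset.sum_le_sum
        intro j _
        exact add_le_add
          (H L hL F hdep hmono hHol' hmaps a b hab' j (a j) le_rfl (hab j).2.1.le)
          (H L hL F hdep hmono hHol' hmaps a b hab' j (b j) (hab j).2.1.le le_rfl)
    _ = (d : ℝ) * (2 * (c₀ * (L : ℝ) ^ ((∑ i ∈ Finset.range d, ⌈κ⁻¹⌉₊ ^ i) - 1))) := by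
        rw [Finset.sum_const, Finset.card_univ, Fintype.card_fin, nsmul_eq_mul]
        ring
    _ ≤ (2 * (d : ℝ) * c₀ + 1) * (L : ℝ) ^ ((∑ i ∈ Finset.range d, ⌈κ⁻¹⌉₊ ^ i) - 1) := by
        nlinarith [hLex]


/-- the central geometric estimate in the proof of Theorem 3:
for a triangular transform `F` of `π` which is `κ`-Hölder and whose conditional CDFs are
`M`-Lipschitz in the last variable, with `β = ⌈κ⁻¹⌉` and `d̃ = ∑_{i=0}^{d−1} β^i`, there is
a constant `c > 0` such that for every `L ≥ 2` and every box `B` with `0 ≤ aᵢ < bᵢ < 1`,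
the image `F(∂B)` of the boundary of `B` meets at most `c L^{d̃−1}` of the `L^{d̃}` cells of
the anisotropic partition of `[0,1)^d` with `i`-th side length `L^{-β^{d−i}}`. -/
theorem boundary_image_cell_count
    {d : ℕ} (hd : 1 ≤ d)
    (π : Measure (Fin d → ℝ)) [IsProbabilityMeasure π] (hπc : π (cubeIcc d) = 1)
    (F : (Fin d → ℝ) → (Fin d → ℝ)) (hF : IsTriangular π F)
    (κ : ℝ) (hκ : κ ∈ Set.Ioc (0 : ℝ) 1)
    (C : ℝ) (hC : 0 ≤ C)
    (hHolder : ∀ x ∈ cubeIcc d, ∀ y ∈ cubeIcc d, ‖F x - F y‖ ≤ C * ‖x - y‖ ^ κ)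
    (M : ℝ)
    (hLip : ∀ (i : Fin d), ∀ x ∈ cubeIcc d, ∀ x' ∈ cubeIcc d,
      (∀ j, j ≠ i → x j = x' j) → |F x i - F x' i| ≤ M * |x i - x' i|) :
    ∃ c : ℝ, 0 < c ∧ ∀ (L : ℕ), 2 ≤ L → ∀ a b : Fin d → ℝ, IsGoodBox a b →
      ({cc : Fin d → ℕ | (∀ i : Fin d, cc i < L ^ (⌈κ⁻¹⌉₊ ^ (d - 1 - (i : ℕ)))) ∧
          (anisoCell d ⌈κ⁻¹⌉₊ L cc ∩ F '' frontier (clBox a b)).Nonempty}.ncard : ℝ) ≤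
        c * (L : ℝ) ^ ((∑ i ∈ Finset.range d, ⌈κ⁻¹⌉₊ ^ i) - 1) :=
  boundary_image_cell_count' hd F hF.dep hF.strictMono hF.bijOn κ hκ C hC hHolder
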